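/- Let (X, M) be an m-complete multi-normed vector lattice with the pre-Lebesgue property. Then X has the Lebesgue and Levi properties if and only if every m-bounded um-closed subset of X is um-complete. -/

import Mathlib

open Filter Topology
set_option linter.unusedSectionVars false
set_option maxHeartbeats 1000000

/-- The um-topology generated by a family of lattice seminorms. -/
def umTop {X : Type*} [AddCommGroup X] [Lattice X] {Λ : Type*} (m : Λ → X → ℝ) :
    TopologicalSpace X :=
  TopologicalSpace.generateFrom
    {s | ∃ (z : X) (ε : ℝ) (l : Λ) (u : X), 0 < ε ∧ 0 ≤ u ∧
          s = {y : X | m l (|y - z| ⊓ u) < ε}}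

set_option linter.unusedSectionVars false
set_option maxHeartbeats 1000000

section Aux2
variable {X : Type*} [AddCommGroup X] [Lattice X]
    [CovariantClass X X (· + ·) (· ≤ ·)] [Module ℝ X]
    {Λ : Type*} {m : Λ → X → ℝ}

lemma aux_sub_inf_pos (a c : X) : a - a ⊓ c = (a - c)⁺ := by
  rw [sub_inf, sub_self, posPart_def, sup_comm]

lemma aux_inf_sub (a b c : X) : a ⊓ b - c = (a - c) ⊓ (b - c) := by
  have h := add_inf a b (-c)
  rw [sub_eq_add_neg, add_comm, h, sub_eq_add_neg, sub_eq_add_neg, add_comm (-c), add_comm (-c)]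

lemma aux_inf_add_inf_le {s t u : X} (hs : 0 ≤ s) (ht : 0 ≤ t) (hu : 0 ≤ u) :
    (s + t) ⊓ u ≤ s ⊓ u + t ⊓ u := by
  rw [add_inf t u (s ⊓ u)]
  refine le_inf ?_ ?_
  · rw [inf_add s u t]
    exact le_inf inf_le_left (inf_le_right.trans (le_add_of_nonneg_right ht))
  · rw [inf_add s u u]
    exact le_inf (inf_le_right.trans (le_add_of_nonneg_left hs))
      (inf_le_right.trans (le_add_of_nonneg_left hu))

lemma aux_trunc_lip {a b w : X} (ha : 0 ≤ a) (hb : 0 ≤ b) (hw : 0 ≤ w) :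
    |a ⊓ w - b ⊓ w| ≤ |a - b| ⊓ w := by
  refine le_inf (abs_inf_sub_inf_le_abs a b w) (abs_le'.mpr ⟨?_, ?_⟩)
  · have := sub_le_sub (inf_le_right : a ⊓ w ≤ w) (le_inf hb hw)
    simpa using this
  · rw [neg_sub]
    have := sub_le_sub (inf_le_right : b ⊓ w ≤ w) (le_inf ha hw)
    simpa using this

lemma aux_posPart_le_abs (a : X) : a⁺ ≤ |a| := by
  rw [posPart_def]; exact sup_le (le_abs_self a) (abs_nonneg a)

lemma aux_negPart_le_abs (a : X) : a⁻ ≤ |a| := by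
  rw [negPart_def]; exact sup_le (neg_le_abs a) (abs_nonneg a)

/-- layer-cake bound : `(n+1) • ((w - n•u)⁺ ⊓ u) ≤ w` for `w, u ≥ 0`. -/
lemma aux_layer {w u : X} (hw : 0 ≤ w) (hu : 0 ≤ u) (n : ℕ) :
    (n + 1) • ((w - n • u)⁺ ⊓ u) ≤ w := by
  set v := (w - n • u)⁺ ⊓ u with hv
  have step : ∀ k : ℕ, w ⊓ (k • u) + ((w - k • u)⁺ ⊓ u) ≤ w ⊓ ((k + 1) • u) := by
    intro k
    rw [← le_sub_iff_add_le', aux_inf_sub]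
    refine le_inf ?_ ?_
    · rw [aux_sub_inf_pos]; exact inf_le_left
    · rw [succ_nsmul, sub_inf, add_sub_cancel_left]
      exact inf_le_right.trans le_sup_right
  have hvk : ∀ k : ℕ, k ≤ n → v ≤ (w - k • u)⁺ ⊓ u := by
    intro k hk
    refine inf_le_inf_right u (posPart_mono (sub_le_sub_left ?_ w))
    exact nsmul_le_nsmul_left hu hk
  have main : ∀ k : ℕ, k ≤ n + 1 → k • v ≤ w ⊓ (k • u) := by
    intro k
    induction k with
    | zero => intro _; simp [hw]
    | succ k ih =>
      intro hk
      have hk' : k ≤ n := Nat.lt_succ_iff.mp hk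
      calc (k + 1) • v = k • v + v := succ_nsmul v k
        _ ≤ w ⊓ (k • u) + ((w - k • u)⁺ ⊓ u) :=
            add_le_add (ih (hk'.trans (Nat.le_succ n))) (hvk k hk')
        _ ≤ w ⊓ ((k + 1) • u) := step k
  exact (main (n + 1) le_rfl).trans inf_le_left


lemma m_zero (hsmul : ∀ l (c : ℝ) (x : X), m l (c • x) = |c| * m l x) (l : Λ) :
    m l 0 = 0 := by
  have := hsmul l 0 0
  simpa using this

lemma m_neg (hsmul : ∀ l (c : ℝ) (x : X), m l (c • x) = |c| * m l x) (l : Λ) (x : X) :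
    m l (-x) = m l x := by
  have := hsmul l (-1) x
  simpa [neg_one_smul] using this

lemma m_nonneg (hadd : ∀ l (x y : X), m l (x + y) ≤ m l x + m l y)
    (hsmul : ∀ l (c : ℝ) (x : X), m l (c • x) = |c| * m l x) (l : Λ) (x : X) :
    0 ≤ m l x := by
  have h1 := hadd l x (-x)
  rw [add_neg_cancel, m_zero hsmul, m_neg hsmul] at h1
  linarith

lemma m_abs (hmono : ∀ l (x y : X), |x| ≤ |y| → m l x ≤ m l y) (l : Λ) (x : X) :
    m l |x| = m l x :=
  le_antisymm (hmono l _ _ (by rw [abs_abs])) (hmono l _ _ (by rw [abs_abs]))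

lemma m_mono' (hmono : ∀ l (x y : X), |x| ≤ |y| → m l x ≤ m l y) (l : Λ) {x y : X}
    (h0 : 0 ≤ x) (h : x ≤ y) : m l x ≤ m l y :=
  hmono l x y (by rw [abs_of_nonneg h0, abs_of_nonneg (h0.trans h)]; exact h)

lemma m_nsmul (hsmul : ∀ l (c : ℝ) (x : X), m l (c • x) = |c| * m l x) (l : Λ) (n : ℕ) (x : X) :
    m l (n • x) = n * m l x := by
  rw [← Nat.cast_smul_eq_nsmul ℝ n x, hsmul]
  simp

lemma m_sub_le (hadd : ∀ l (x y : X), m l (x + y) ≤ m l x + m l y)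
    (hsmul : ∀ l (c : ℝ) (x : X), m l (c • x) = |c| * m l x) (l : Λ) (a b c : X) :
    m l (a - b) ≤ m l (a - c) + m l (c - b) := by
  have h := hadd l (a - c) (c - b)
  simpa using h

/-- Pre-Lebesgue: every order-bounded monotone net is m-Cauchy. -/
lemma auxA (hadd : ∀ l (x y : X), m l (x + y) ≤ m l x + m l y)
    (hsmul : ∀ l (c : ℝ) (x : X), m l (c • x) = |c| * m l x)
    (hmono : ∀ l (x y : X), |x| ≤ |y| → m l x ≤ m l y)
    (hpreLeb : ∀ (y : ℕ → X) (b : X), Monotone y → (∀ n, 0 ≤ y n) → (∀ n, y n ≤ b) →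
        ∀ l, ∀ ε > (0:ℝ), ∃ N, ∀ i ≥ N, ∀ j ≥ N, m l (y i - y j) < ε)
    {α : Type*} [Preorder α] [Nonempty α] [IsDirected α (· ≤ ·)]
    (y : α → X) (hy : Monotone y) (hi : X) (hub : ∀ a, y a ≤ hi)
    (l : Λ) {ε : ℝ} (hε : 0 < ε) :
    ∃ N, ∀ b ≥ N, ∀ c ≥ N, m l (y b - y c) < ε := by
  by_contra hcon
  push_neg at hcon
  have key : ∀ N : α, ∃ p : α × α, N ≤ p.1 ∧ p.1 ≤ p.2 ∧ ε / 2 ≤ m l (y p.2 - y p.1) := by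
    intro N
    obtain ⟨b, hb, c, hc, hbc⟩ := hcon N
    obtain ⟨d, hbd, hcd⟩ := directed_of (· ≤ ·) b c
    have hsplit : m l (y b - y c) ≤ m l (y b - y d) + m l (y d - y c) :=
      m_sub_le hadd hsmul l _ _ _
    rw [← m_neg hsmul l (y b - y d), neg_sub] at hsplit
    by_cases hcase : ε / 2 ≤ m l (y d - y b)
    · exact ⟨(b, d), hb, hbd, hcase⟩
    · exact ⟨(c, d), hc, hcd, by linarith⟩
  choose f hf1 hf2 hf3 using key
  set a0 := Classical.arbitrary α with ha0
  let g : ℕ → α × α := fun k => Nat.rec (f a0) (fun _ ih => f ih.2) k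
  have hgsucc : ∀ k, g (k + 1) = f (g k).2 := fun _ => rfl
  have hchain : ∀ k, (g k).2 ≤ (g (k + 1)).1 := by
    intro k; rw [hgsucc]; exact hf1 _
  have hg2 : ∀ k, (g k).1 ≤ (g k).2 := by
    intro k
    cases k with
    | zero => exact hf2 a0
    | succ k => rw [hgsucc]; exact hf2 _
  have hg3 : ∀ k, ε / 2 ≤ m l (y (g k).2 - y (g k).1) := by
    intro k
    cases k with
    | zero => exact hf3 a0
    | succ k => rw [hgsucc]; exact hf3 _
  have hcmono : Monotone fun k => (g k).1 :=
    monotone_nat_of_le_succ fun k => (hg2 k).trans (hchain k)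
  set z : ℕ → X := fun k => y (g k).1 - y (g 0).1 with hz
  have hzmono : Monotone z := fun i j hij => sub_le_sub_right (hy (hcmono hij)) _
  have hznn : ∀ k, 0 ≤ z k := fun k => sub_nonneg.mpr (hy (hcmono (Nat.zero_le k)))
  have hzub : ∀ k, z k ≤ hi - y (g 0).1 := fun k => sub_le_sub_right (hub _) _
  obtain ⟨N, hN⟩ := hpreLeb z (hi - y (g 0).1) hzmono hznn hzub l (ε / 2) (half_pos hε)
  have h1 := hN (N + 1) (Nat.le_succ N) N le_rfl
  have h2 : z (N + 1) - z N = y (g (N + 1)).1 - y (g N).1 := by simp [hz]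
  rw [h2] at h1
  have h3 : ε / 2 ≤ m l (y (g (N + 1)).1 - y (g N).1) := by
    refine (hg3 N).trans ?_
    refine hmono l _ _ ?_
    have hle : y (g N).2 - y (g N).1 ≤ y (g (N + 1)).1 - y (g N).1 :=
      sub_le_sub_right (hy (hchain N)) _
    have h0 : 0 ≤ y (g N).2 - y (g N).1 := sub_nonneg.mpr (hy (hg2 N))
    rw [abs_of_nonneg h0, abs_of_nonneg (h0.trans hle)]
    exact hle
  linarith

/-- A monotone net m-converging to `y₀` has `y₀` as its supremum. -/
lemma auxLUB (hadd : ∀ l (x y : X), m l (x + y) ≤ m l x + m l y)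
    (hsmul : ∀ l (c : ℝ) (x : X), m l (c • x) = |c| * m l x)
    (hmono : ∀ l (x y : X), |x| ≤ |y| → m l x ≤ m l y)
    (hsep : ∀ x : X, (∀ l, m l x = 0) → x = 0)
    {α : Type*} [Preorder α] [Nonempty α] [IsDirected α (· ≤ ·)]
    (y : α → X) (hy : Monotone y) (y₀ : X)
    (hconv : ∀ l, Tendsto (fun a => m l (y a - y₀)) atTop (𝓝 0)) :
    IsLUB (Set.range y) y₀ := by
  haveI : (atTop : Filter α).NeBot := atTop_neBot_iff.mpr ⟨‹_›, ‹_›⟩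
  constructor
  · rintro _ ⟨i, rfl⟩
    have hz : (y i - y₀)⁺ = 0 := by
      refine hsep _ fun l => le_antisymm ?_ (m_nonneg hadd hsmul l _)
      refine ge_of_tendsto (hconv l) ?_
      refine mem_of_superset (mem_atTop i) fun b hb => ?_
      refine hmono l _ _ ?_
      rw [abs_of_nonneg (posPart_nonneg _)]
      exact (posPart_mono (sub_le_sub_right (hy hb) y₀)).trans (aux_posPart_le_abs _)
    rw [← sub_nonpos, ← posPart_eq_zero]; exact hz
  · intro w hw
    have hz : (y₀ - w)⁺ = 0 := by
      refine hsep _ fun l => le_antisymm ?_ (m_nonneg hadd hsmul l _)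
      refine ge_of_tendsto (hconv l) ?_
      refine Eventually.of_forall fun b => ?_
      refine hmono l _ _ ?_
      rw [abs_of_nonneg (posPart_nonneg _)]
      have h1 : y₀ - w ≤ y₀ - y b := sub_le_sub_left (hw (Set.mem_range_self b)) _
      exact (posPart_mono h1).trans ((aux_posPart_le_abs _).trans (abs_sub_comm y₀ (y b)).le)
    rw [← sub_nonpos, ← posPart_eq_zero]; exact hz
end Aux2

section Aux3
variable {X : Type*} [AddCommGroup X] [Lattice X]
    [CovariantClass X X (· + ·) (· ≤ ·)] [Module ℝ X]
    {Λ : Type*} {m : Λ → X → ℝ}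

lemma aux_tendsto_of_forall {β : Type*} [Preorder β] {f : β → ℝ}
    (hnn : ∀ b, 0 ≤ f b) (h : ∀ ε > (0:ℝ), ∃ N, ∀ b ≥ N, f b < ε) :
    Tendsto f atTop (𝓝 0) := by
  rw [Metric.tendsto_nhds]
  intro ε hε
  obtain ⟨N, hN⟩ := h ε hε
  refine mem_of_superset (mem_atTop N) fun b hb => ?_
  simp only [Real.dist_eq, sub_zero, Set.mem_setOf_eq]
  rw [abs_of_nonneg (hnn b)]
  exact hN b hb

lemma aux_forall_of_tendsto {β : Type*} [Preorder β] [Nonempty β] [IsDirected β (· ≤ ·)]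
    {f : β → ℝ} (h : Tendsto f atTop (𝓝 0)) {ε : ℝ} (hε : 0 < ε) :
    ∃ N, ∀ b ≥ N, f b < ε := by
  have h2 := Metric.tendsto_nhds.mp h ε hε
  rw [eventually_iff, mem_atTop_sets] at h2
  obtain ⟨N, hN⟩ := h2
  refine ⟨N, fun b hb => (le_abs_self _).trans_lt ?_⟩
  simpa [Real.dist_eq] using hN b hb

lemma aux_mem_of_umclosed (hadd : ∀ l (x y : X), m l (x + y) ≤ m l x + m l y)
    (hsmul : ∀ l (c : ℝ) (x : X), m l (c • x) = |c| * m l x)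
    (hmono : ∀ l (x y : X), |x| ≤ |y| → m l x ≤ m l y)
    {A : Set X} (hA : @IsClosed X (umTop m) A)
    {β : Type*} [Preorder β] [Nonempty β] [IsDirected β (· ≤ ·)]
    (x : β → X) (hxA : ∀ b, x b ∈ A) (x₀ : X)
    (hconv : ∀ u : X, 0 ≤ u → ∀ l, Tendsto (fun b => m l (|x b - x₀| ⊓ u)) atTop (𝓝 0)) :
    x₀ ∈ A := by
  haveI : (atTop : Filter β).NeBot := atTop_neBot_iff.mpr ⟨‹_›, ‹_›⟩
  by_contra hx₀
  have hopen : TopologicalSpace.GenerateOpen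
      {s | ∃ (z : X) (ε : ℝ) (l : Λ) (u : X), 0 < ε ∧ 0 ≤ u ∧
          s = {y : X | m l (|y - z| ⊓ u) < ε}} Aᶜ := hA.isOpen_compl
  have key : ∀ U, TopologicalSpace.GenerateOpen
      {s | ∃ (z : X) (ε : ℝ) (l : Λ) (u : X), 0 < ε ∧ 0 ≤ u ∧
          s = {y : X | m l (|y - z| ⊓ u) < ε}} U → x₀ ∈ U → ∀ᶠ b in atTop, x b ∈ U := by
    intro U hU
    induction hU with
    | basic s hs =>
      obtain ⟨z, ε, l, u, hε, hu, rfl⟩ := hs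
      intro hmem
      simp only [Set.mem_setOf_eq] at hmem
      obtain ⟨N, hN⟩ := aux_forall_of_tendsto (hconv u hu l) (sub_pos.mpr hmem)
      refine mem_of_superset (mem_atTop N) fun b hb => ?_
      simp only [Set.mem_setOf_eq]
      have h1 : |x b - z| ⊓ u ≤ |x b - x₀| ⊓ u + |x₀ - z| ⊓ u := by
        have habs : |x b - z| ≤ |x b - x₀| + |x₀ - z| := by
          calc |x b - z| = |(x b - x₀) + (x₀ - z)| := by rw [sub_add_sub_cancel]
            _ ≤ _ := abs_add_le _ _
        refine le_trans (inf_le_inf_right u habs) ?_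
        exact aux_inf_add_inf_le (abs_nonneg _) (abs_nonneg _) hu
      have h2 : m l (|x b - z| ⊓ u) ≤ m l (|x b - x₀| ⊓ u) + m l (|x₀ - z| ⊓ u) :=
        le_trans (m_mono' hmono l (le_inf (abs_nonneg _) hu) h1) (hadd l _ _)
      have h3 := hN b hb
      linarith
    | univ => exact fun _ => Eventually.of_forall fun _ => trivial
    | inter U V _ _ ihU ihV =>
      intro hm
      exact (ihU hm.1).and (ihV hm.2)
    | sUnion S _ ih =>
      rintro ⟨U, hUS, hmem⟩
      exact (ih U hUS hmem).mono fun b hb => ⟨U, hUS, hb⟩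
  obtain ⟨b, hb⟩ := (key Aᶜ hopen hx₀).exists
  exact hb (hxA b)

lemma aux_closed_ball (hadd : ∀ l (x y : X), m l (x + y) ≤ m l x + m l y)
    (hsmul : ∀ l (c : ℝ) (x : X), m l (c • x) = |c| * m l x)
    (hmono : ∀ l (x y : X), |x| ≤ |y| → m l x ≤ m l y)
    (hsep : ∀ x : X, (∀ l, m l x = 0) → x = 0)
    (M : Λ → ℝ) :
    @IsClosed X (umTop m) {y : X | 0 ≤ y ∧ ∀ l, m l y ≤ M l} := by
  set G : Set (Set X) := {s | ∃ (z : X) (ε : ℝ) (l : Λ) (u : X), 0 < ε ∧ 0 ≤ u ∧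
          s = {y : X | m l (|y - z| ⊓ u) < ε}} with hG
  set A : Set X := {y : X | 0 ≤ y ∧ ∀ l, m l y ≤ M l} with hAdef
  have keypt : ∀ y ∈ Aᶜ, ∃ s ∈ G, y ∈ s ∧ s ⊆ Aᶜ := by
    intro y hy
    simp only [Set.mem_compl_iff, hAdef, Set.mem_setOf_eq, not_and, not_forall] at hy
    by_cases h0 : 0 ≤ y
    · obtain ⟨l, hl⟩ := hy h0
      have hδ : 0 < m l y - M l := by linarith [not_le.mp hl]
      refine ⟨{z : X | m l (|z - y| ⊓ y) < m l y - M l}, ⟨y, _, l, y, hδ, h0, rfl⟩, ?_, ?_⟩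
      · simp only [Set.mem_setOf_eq, sub_self, abs_zero]
        rw [inf_eq_left.mpr h0, m_zero hsmul]
        exact hδ
      · intro z hz
        simp only [Set.mem_setOf_eq] at hz
        intro hzA
        obtain ⟨hz0, hzM⟩ := hzA
        have hkey : y - z ≤ |z - y| ⊓ y := by
          refine le_trans (le_posPart (y - z)) (le_inf ?_ ?_)
          · exact (aux_posPart_le_abs _).trans (abs_sub_comm y z).le
          · refine le_trans (posPart_mono (sub_le_self y hz0)) ?_
            exact le_of_eq (posPart_eq_self.mpr h0)
        have h2 : y ≤ z + |z - y| ⊓ y := by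
          have h2' := add_le_add_right hkey z
          rwa [add_sub_cancel] at h2'
        have h3 : m l y ≤ m l z + m l (|z - y| ⊓ y) :=
          le_trans (m_mono' hmono l h0 h2) (hadd l _ _)
        linarith [hzM l]
    · have hyn : y⁻ ≠ 0 := fun h => h0 (negPart_eq_zero.mp h)
      have hex : ∃ l, m l y⁻ ≠ 0 := by
        by_contra hc
        push_neg at hc
        exact hyn (hsep _ hc)
      obtain ⟨l, hl⟩ := hex
      have hδ : 0 < m l y⁻ := lt_of_le_of_ne (m_nonneg hadd hsmul l _) (Ne.symm hl)
      refine ⟨{z : X | m l (|z - y| ⊓ y⁻) < m l y⁻}, ⟨y, _, l, y⁻, hδ, negPart_nonneg y, rfl⟩, ?_, ?_⟩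
      · simp only [Set.mem_setOf_eq, sub_self, abs_zero]
        rw [inf_eq_left.mpr (negPart_nonneg y), m_zero hsmul]
        exact hδ
      · intro z hz
        simp only [Set.mem_setOf_eq] at hz
        intro hzA
        obtain ⟨hz0, _⟩ := hzA
        have hkey : y⁻ ≤ |z - y| := by
          have h1 : -y ≤ z - y := by simpa using add_le_add_right hz0 (-y)
          calc y⁻ = (-y) ⊔ 0 := negPart_def y
            _ = (-y)⁺ := (posPart_def (-y)).symm
            _ ≤ (z - y)⁺ := posPart_mono h1
            _ ≤ |z - y| := aux_posPart_le_abs _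
        rw [inf_eq_right.mpr hkey] at hz
        exact lt_irrefl _ hz
  refine @IsClosed.mk X (umTop m) A ?_
  show TopologicalSpace.GenerateOpen G Aᶜ
  have hrw : Aᶜ = ⋃₀ {s | s ∈ G ∧ s ⊆ Aᶜ} := by
    apply Set.Subset.antisymm
    · intro y hy
      obtain ⟨s, hsG, hys, hssub⟩ := keypt y hy
      exact ⟨s, ⟨hsG, hssub⟩, hys⟩
    · rintro y ⟨s, ⟨_, hssub⟩, hys⟩
      exact hssub hys
  rw [hrw]
  exact TopologicalSpace.GenerateOpen.sUnion _ fun s hs => TopologicalSpace.GenerateOpen.basic s hs.1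

end Aux3
section Aux4
variable {X : Type*} [AddCommGroup X] [Lattice X]
    [CovariantClass X X (· + ·) (· ≤ ·)] [Module ℝ X]
    {Λ : Type*} {m : Λ → X → ℝ}

/-- directedness of an upper set -/
lemma aux_dir_subtype {α : Type*} [Preorder α] [IsDirected α (· ≤ ·)] (a1 : α) :
    IsDirected {a : α // a1 ≤ a} (· ≤ ·) := by
  constructor
  rintro ⟨p, hp⟩ ⟨q, hq⟩
  obtain ⟨d, h1, h2⟩ := directed_of (· ≤ ·) p q
  exact ⟨⟨d, hp.trans h1⟩, h1, h2⟩

/-- Lemma B : monotone m-bounded nets are um-Cauchy (pre-Lebesgue). -/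
lemma auxB (hadd : ∀ l (x y : X), m l (x + y) ≤ m l x + m l y)
    (hsmul : ∀ l (c : ℝ) (x : X), m l (c • x) = |c| * m l x)
    (hmono : ∀ l (x y : X), |x| ≤ |y| → m l x ≤ m l y)
    (hpreLeb : ∀ (y : ℕ → X) (b : X), Monotone y → (∀ n, 0 ≤ y n) → (∀ n, y n ≤ b) →
        ∀ l, ∀ ε > (0:ℝ), ∃ N, ∀ i ≥ N, ∀ j ≥ N, m l (y i - y j) < ε)
    {α : Type*} [Preorder α] [Nonempty α] [IsDirected α (· ≤ ·)]
    (x : α → X) (hx : Monotone x) (l : Λ) (M : ℝ) (hM : ∀ a, m l (x a) ≤ M)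
    {u : X} (hu : 0 ≤ u) {ε : ℝ} (hε : 0 < ε) :
    ∃ N, ∀ b ≥ N, ∀ c ≥ N, m l (|x b - x c| ⊓ u) < ε := by
  set a1 := Classical.arbitrary α with ha1
  obtain ⟨n, hn⟩ := exists_nat_gt (8 * M / ε)
  have hn2 : 8 * M < ε * (n + 1) := by
    have h1 : 8 * M < ε * n := by
      rw [div_lt_iff₀ hε] at hn
      linarith [hn]
    nlinarith
  haveI : IsDirected {a : α // a1 ≤ a} (· ≤ ·) := aux_dir_subtype a1
  haveI : Nonempty {a : α // a1 ≤ a} := ⟨⟨a1, le_refl a1⟩⟩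
  set y : {a : α // a1 ≤ a} → X := fun a => x a.1 ⊓ (x a1 + n • u) with hy
  have hymono : Monotone y := fun p q h => inf_le_inf_right _ (hx h)
  have hyub : ∀ a, y a ≤ x a1 + n • u := fun a => inf_le_right
  obtain ⟨N1, hN1⟩ := auxA hadd hsmul hmono hpreLeb y hymono _ hyub l
    (show (0:ℝ) < ε / 4 by linarith)
  have pair : ∀ c d : α, N1.1 ≤ c → c ≤ d → m l ((x d - x c) ⊓ u) < ε / 2 := by
    intro c d hc hcd
    have hc1 : a1 ≤ c := N1.2.trans hc
    have hd1 : a1 ≤ d := hc1.trans hcd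
    set r : X := (x d - (x a1 + n • u))⁺ with hr
    have hdecomp : x d - x c ≤ (y ⟨d, hd1⟩ - y ⟨c, hc1⟩) + r := by
      have h1 : x d - y ⟨d, hd1⟩ = r := aux_sub_inf_pos (x d) (x a1 + n • u)
      have h2 : y ⟨c, hc1⟩ ≤ x c := inf_le_left
      have h3 : x d = y ⟨d, hd1⟩ + r := by rw [← h1]; abel
      calc x d - x c = y ⟨d, hd1⟩ + r - x c := by rw [← h3]
        _ ≤ y ⟨d, hd1⟩ + r - y ⟨c, hc1⟩ := by
            exact sub_le_sub_left h2 _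
        _ = (y ⟨d, hd1⟩ - y ⟨c, hc1⟩) + r := by abel
    have hyd0 : 0 ≤ y ⟨d, hd1⟩ - y ⟨c, hc1⟩ :=
      sub_nonneg.mpr (hymono (show (⟨c, hc1⟩ : {a : α // a1 ≤ a}) ≤ ⟨d, hd1⟩ from hcd))
    have hr0 : 0 ≤ r := posPart_nonneg _
    have hxdc : 0 ≤ x d - x c := sub_nonneg.mpr (hx hcd)
    have hsplit : (x d - x c) ⊓ u ≤ (y ⟨d, hd1⟩ - y ⟨c, hc1⟩) ⊓ u + r ⊓ u :=
      le_trans (inf_le_inf_right u hdecomp) (aux_inf_add_inf_le hyd0 hr0 hu)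
    have hm1 : m l ((y ⟨d, hd1⟩ - y ⟨c, hc1⟩) ⊓ u) < ε / 4 := by
      refine lt_of_le_of_lt (m_mono' hmono l (le_inf hyd0 hu) inf_le_left) ?_
      exact hN1 ⟨d, hd1⟩ (Subtype.mk_le_mk.mpr (hc.trans hcd)) ⟨c, hc1⟩ (Subtype.mk_le_mk.mpr hc)
    have hm2 : m l (r ⊓ u) < ε / 4 := by
      have hw0 : 0 ≤ x d - x a1 := sub_nonneg.mpr (hx hd1)
      have hlayer : (n + 1) • (r ⊓ u) ≤ x d - x a1 := by
        have := aux_layer hw0 hu n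
        rw [hr, sub_add_eq_sub_sub]
        exact this
      have hb1 : m l ((n + 1) • (r ⊓ u)) ≤ m l (x d - x a1) :=
        m_mono' hmono l (nsmul_nonneg (le_inf hr0 hu) (n + 1)) hlayer
      rw [m_nsmul hsmul] at hb1
      push_cast at hb1
      have hb2 : m l (x d - x a1) ≤ 2 * M := by
        have := hadd l (x d) (-(x a1))
        rw [m_neg hsmul] at this
        have h4 : m l (x d - x a1) ≤ m l (x d) + m l (x a1) := by
          rw [sub_eq_add_neg]; exact this
        linarith [hM d, hM a1]
      have hnpos : (0:ℝ) < (n:ℝ) + 1 := by positivity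
      have hv : m l (r ⊓ u) * ((n:ℝ) + 1) < ε / 4 * ((n:ℝ) + 1) := by nlinarith [hb1, hb2, hn2]
      exact lt_of_mul_lt_mul_right hv hnpos.le
    calc m l ((x d - x c) ⊓ u)
        ≤ m l ((y ⟨d, hd1⟩ - y ⟨c, hc1⟩) ⊓ u + r ⊓ u) :=
          m_mono' hmono l (le_inf hxdc hu) hsplit
      _ ≤ m l ((y ⟨d, hd1⟩ - y ⟨c, hc1⟩) ⊓ u) + m l (r ⊓ u) := hadd l _ _
      _ < ε / 4 + ε / 4 := add_lt_add hm1 hm2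
      _ = ε / 2 := by ring
  refine ⟨N1.1, fun b hb c hc => ?_⟩
  obtain ⟨d, hbd, hcd⟩ := directed_of (· ≤ ·) b c
  have habs : |x b - x c| ≤ (x d - x b) + (x d - x c) := by
    refine abs_le'.mpr ⟨?_, ?_⟩
    · exact (sub_le_sub_right (hx hbd) (x c)).trans
        (le_add_of_nonneg_left (sub_nonneg.mpr (hx hbd)))
    · rw [neg_sub]
      exact (sub_le_sub_right (hx hcd) (x b)).trans
        (le_add_of_nonneg_right (sub_nonneg.mpr (hx hcd)))
  have h1 : |x b - x c| ⊓ u ≤ (x d - x b) ⊓ u + (x d - x c) ⊓ u :=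
    le_trans (inf_le_inf_right u habs)
      (aux_inf_add_inf_le (sub_nonneg.mpr (hx hbd)) (sub_nonneg.mpr (hx hcd)) hu)
  calc m l (|x b - x c| ⊓ u) ≤ m l ((x d - x b) ⊓ u + (x d - x c) ⊓ u) :=
      m_mono' hmono l (le_inf (abs_nonneg _) hu) h1
    _ ≤ m l ((x d - x b) ⊓ u) + m l ((x d - x c) ⊓ u) := hadd l _ _
    _ < ε / 2 + ε / 2 := add_lt_add (pair b d hb hbd) (pair c d hc hcd)
    _ = ε := by ring
end Aux4
section Aux5
variable {X : Type*} [AddCommGroup X] [Lattice X]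
    [CovariantClass X X (· + ·) (· ≤ ·)] [Module ℝ X]
    {Λ : Type*} {m : Λ → X → ℝ}

lemma aux_posPart_lip (a b : X) : |a⁺ - b⁺| ≤ |a - b| := by
  rw [posPart_def, posPart_def]
  exact abs_sup_sub_sup_le_abs a b 0

lemma aux_negPart_lip (a b : X) : |a⁻ - b⁻| ≤ |a - b| := by
  rw [negPart_def, negPart_def]
  refine (abs_sup_sub_sup_le_abs (-a) (-b) 0).trans ?_
  rw [neg_sub_neg, abs_sub_comm]

lemma aux_inf_lip2 (a a' c c' : X) : |a ⊓ c - a' ⊓ c'| ≤ |a - a'| + |c - c'| := by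
  calc |a ⊓ c - a' ⊓ c'| = |(a ⊓ c - a' ⊓ c) + (a' ⊓ c - a' ⊓ c')| := by rw [sub_add_sub_cancel]
    _ ≤ |a ⊓ c - a' ⊓ c| + |a' ⊓ c - a' ⊓ c'| := abs_add_le _ _
    _ ≤ |a - a'| + |c - c'| := by
        refine add_le_add (abs_inf_sub_inf_le_abs a a' c) ?_
        rw [inf_comm a' c, inf_comm a' c']
        exact abs_inf_sub_inf_le_abs c c' a'

lemma aux_isLUB_add {ι : Sort*} {f : ι → X} {a : X} (h : IsLUB (Set.range f) a) (c : X) :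
    IsLUB (Set.range fun i => f i + c) (a + c) := by
  constructor
  · rintro _ ⟨i, rfl⟩
    exact add_le_add_left (h.1 (Set.mem_range_self i)) c
  · intro w hw
    have : ∀ i, f i ≤ w - c := fun i =>
      le_sub_iff_add_le.mpr (hw (Set.mem_range_self i))
    have h2 : a ≤ w - c := h.2 (by rintro _ ⟨i, rfl⟩; exact this i)
    exact add_le_of_le_sub_right h2

lemma aux_isLUB_inf {ι : Sort*} {f : ι → X} {a : X} (h : IsLUB (Set.range f) a) (c : X) :
    IsLUB (Set.range fun i => f i ⊓ c) (a ⊓ c) := by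
  constructor
  · rintro _ ⟨i, rfl⟩
    exact inf_le_inf_right c (h.1 (Set.mem_range_self i))
  · intro w hw
    have key : ∀ i, f i ≤ w - a ⊓ c + a := by
      intro i
      have h1 : a ⊓ c - f i ⊓ c ≤ a - f i := by
        have h2 : |a ⊓ c - f i ⊓ c| ≤ |a - f i| := abs_inf_sub_inf_le_abs a (f i) c
        have h3 : |a - f i| = a - f i :=
          abs_of_nonneg (sub_nonneg.mpr (h.1 (Set.mem_range_self i)))
        exact (le_abs_self _).trans (h2.trans_eq h3)
      have h4 : f i ⊓ c ≤ w := hw (Set.mem_range_self i)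
      -- from h1 : a⊓c - f i⊓c ≤ a - f i, get f i ≤ (f i ⊓ c) - a⊓c + a ≤ w - a⊓c + a
      have h5 : f i ≤ f i ⊓ c - a ⊓ c + a := by
        calc f i = f i ⊓ c - a ⊓ c + f i + (a ⊓ c - f i ⊓ c) := by abel
          _ ≤ f i ⊓ c - a ⊓ c + f i + (a - f i) := add_le_add_right h1 _
          _ = f i ⊓ c - a ⊓ c + a := by abel
      exact h5.trans (by exact add_le_add_left (sub_le_sub_right h4 _) a)
    have h6 : a ≤ w - a ⊓ c + a := h.2 (by rintro _ ⟨i, rfl⟩; exact key i)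
    -- a ≤ w - a⊓c + a  ⇒  a⊓c ≤ w
    have h7 : a ⊓ c ≤ w := by
      have h8 := sub_nonneg.mpr h6
      have h9 : w - a ⊓ c + a - a = w - a ⊓ c := by abel
      rw [h9] at h8
      have := sub_nonneg.mp h8
      exact this
    exact h7
end Aux5
section Aux6
variable {X : Type*} [AddCommGroup X] [Lattice X]
    [CovariantClass X X (· + ·) (· ≤ ·)] [Module ℝ X]
    {Λ : Type*} {m : Λ → X → ℝ}

/-- A monotone net um-converging to `x₀` has `x₀` as its supremum. -/
lemma auxLUBum (hadd : ∀ l (x y : X), m l (x + y) ≤ m l x + m l y)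
    (hsmul : ∀ l (c : ℝ) (x : X), m l (c • x) = |c| * m l x)
    (hmono : ∀ l (x y : X), |x| ≤ |y| → m l x ≤ m l y)
    (hsep : ∀ x : X, (∀ l, m l x = 0) → x = 0)
    {α : Type*} [Preorder α] [Nonempty α] [IsDirected α (· ≤ ·)]
    (x : α → X) (hx : Monotone x) (x₀ : X)
    (hconv : ∀ u : X, 0 ≤ u → ∀ l, Tendsto (fun b => m l (|x b - x₀| ⊓ u)) atTop (𝓝 0)) :
    IsLUB (Set.range x) x₀ := by
  haveI : (atTop : Filter α).NeBot := atTop_neBot_iff.mpr ⟨‹_›, ‹_›⟩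
  constructor
  · rintro _ ⟨i, rfl⟩
    have hz : (x i - x₀)⁺ = 0 := by
      refine hsep _ fun l => le_antisymm ?_ (m_nonneg hadd hsmul l _)
      refine ge_of_tendsto (hconv ((x i - x₀)⁺) (posPart_nonneg _) l) ?_
      refine mem_of_superset (mem_atTop i) fun b hb => ?_
      refine m_mono' hmono l (posPart_nonneg _) (le_inf ?_ le_rfl)
      exact (posPart_mono (sub_le_sub_right (hx hb) x₀)).trans (aux_posPart_le_abs _)
    rw [← sub_nonpos, ← posPart_eq_zero]; exact hz
  · intro v hv
    have hz : (x₀ - v)⁺ = 0 := by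
      refine hsep _ fun l => le_antisymm ?_ (m_nonneg hadd hsmul l _)
      refine ge_of_tendsto (hconv ((x₀ - v)⁺) (posPart_nonneg _) l) ?_
      refine Eventually.of_forall fun b => ?_
      refine m_mono' hmono l (posPart_nonneg _) (le_inf ?_ le_rfl)
      have h1 : x₀ - v ≤ x₀ - x b := sub_le_sub_left (hv (Set.mem_range_self b)) _
      exact (posPart_mono h1).trans ((aux_posPart_le_abs _).trans (abs_sub_comm x₀ (x b)).le)
    rw [← sub_nonpos, ← posPart_eq_zero]; exact hz
end Aux6


/-- Let `(X, M)` be an m-complete MNVL with the pre-Lebesgue property.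
Then `X` has the Lebesgue and Levi properties iff every m-bounded um-closed subset of `X`
is um-complete. -/
theorem stmt16 {X : Type u} [AddCommGroup X] [Lattice X]
    [CovariantClass X X (· + ·) (· ≤ ·)] [Module ℝ X]
    {Λ : Type*} (m : Λ → X → ℝ)
    (hadd : ∀ l (x y : X), m l (x + y) ≤ m l x + m l y)
    (hsmul : ∀ l (c : ℝ) (x : X), m l (c • x) = |c| * m l x)
    (hmono : ∀ l (x y : X), |x| ≤ |y| → m l x ≤ m l y)
    (hsep : ∀ x : X, (∀ l, m l x = 0) → x = 0)
    (hdir : ∀ l₁ l₂, ∃ l₃, ∀ x : X, m l₁ x ≤ m l₃ x ∧ m l₂ x ≤ m l₃ x)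
    -- m-completeness (for nets)
    (hcomplete : ∀ (α : Type u) [Preorder α] [Nonempty α] [IsDirected α (· ≤ ·)]
        (x : α → X),
        (∀ l, ∀ ε > (0:ℝ), ∃ N, ∀ a ≥ N, ∀ b ≥ N, m l (x a - x b) < ε) →
        ∃ x₀ : X, ∀ l, Tendsto (fun a => m l (x a - x₀)) atTop (𝓝 0))
    -- pre-Lebesgue property
    (hpreLeb : ∀ (y : ℕ → X) (b : X), Monotone y → (∀ n, 0 ≤ y n) → (∀ n, y n ≤ b) →
        ∀ l, ∀ ε > (0:ℝ), ∃ N, ∀ i ≥ N, ∀ j ≥ N, m l (y i - y j) < ε) :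
    -- Lebesgue and Levi properties ...
    ((∀ (α : Type u) [Preorder α] [Nonempty α] [IsDirected α (· ≤ ·)] (x : α → X),
        Antitone x → IsGLB (Set.range x) 0 →
        ∀ l, Tendsto (fun a => m l (x a)) atTop (𝓝 0)) ∧
     (∀ (α : Type u) [Preorder α] [Nonempty α] [IsDirected α (· ≤ ·)] (x : α → X),
        Monotone x → (∀ a, 0 ≤ x a) → (∀ l, ∃ M : ℝ, ∀ a, m l (x a) ≤ M) →
        ∃ s : X, IsLUB (Set.range x) s)) ↔
    -- ... iff every m-bounded um-closed set is um-complete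
    (∀ A : Set X, (∀ l, ∃ M : ℝ, ∀ a ∈ A, m l a ≤ M) → @IsClosed X (umTop m) A →
      ∀ (β : Type u) [Preorder β] [Nonempty β] [IsDirected β (· ≤ ·)] (x : β → X),
        (∀ b, x b ∈ A) →
        (∀ u : X, 0 ≤ u → ∀ l, ∀ ε > (0:ℝ), ∃ N, ∀ b ≥ N, ∀ c ≥ N,
            m l (|x b - x c| ⊓ u) < ε) →
        ∃ x₀ ∈ A, ∀ u : X, 0 ≤ u → ∀ l,
            Tendsto (fun b => m l (|x b - x₀| ⊓ u)) atTop (𝓝 0)) := by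
  have lebesgue : ∀ (α : Type u) [Preorder α] [Nonempty α] [IsDirected α (· ≤ ·)] (x : α → X),
      Antitone x → IsGLB (Set.range x) 0 →
      ∀ l, Tendsto (fun a => m l (x a)) atTop (𝓝 0) := by
    intro α _ _ _ x hx hglb l
    set a0 : α := Classical.arbitrary α with ha0
    haveI : IsDirected {a : α // a0 ≤ a} (· ≤ ·) := aux_dir_subtype a0
    haveI : Nonempty {a : α // a0 ≤ a} := ⟨⟨a0, le_refl _⟩⟩
    have hxnn : ∀ a, 0 ≤ x a := fun a => hglb.1 (Set.mem_range_self a)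
    set y : {a : α // a0 ≤ a} → X := fun b => x a0 - x b.1 with hy
    have hymono : Monotone y := fun p q h => sub_le_sub_left (hx h) _
    have hyub : ∀ b, y b ≤ x a0 := fun b => sub_le_self (x a0) (hxnn b.1)
    obtain ⟨y₀, hy₀⟩ := hcomplete _ y
      (fun l' ε hε => auxA hadd hsmul hmono hpreLeb y hymono _ hyub l' hε)
    have hlub : IsLUB (Set.range y) y₀ := auxLUB hadd hsmul hmono hsep y hymono y₀ hy₀
    have hxa0 : y₀ = x a0 := by
      refine le_antisymm (hlub.2 ?_) ?_
      · rintro _ ⟨b, rfl⟩; exact hyub b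
      · have hlow : x a0 - y₀ ≤ 0 := by
          refine hglb.2 ?_
          rintro _ ⟨a, rfl⟩
          obtain ⟨d, had, ha0d⟩ := directed_of (· ≤ ·) a a0
          have h1 : y ⟨d, ha0d⟩ ≤ y₀ := hlub.1 (Set.mem_range_self _)
          have h2 : x a0 - y₀ ≤ x a0 - y ⟨d, ha0d⟩ := sub_le_sub_left h1 _
          have h3 : x a0 - y ⟨d, ha0d⟩ = x d := by simp [hy]
          exact (h2.trans_eq h3).trans (hx had)
        have := sub_nonpos.mp hlow
        exact this
    refine aux_tendsto_of_forall (fun a => m_nonneg hadd hsmul l _) fun ε hε => ?_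
    obtain ⟨Nb, hNb⟩ := aux_forall_of_tendsto (hy₀ l) hε
    refine ⟨Nb.1, fun a ha => ?_⟩
    have h1 := hNb ⟨a, Nb.2.trans ha⟩ (Subtype.mk_le_mk.mpr ha)
    have h2 : y ⟨a, Nb.2.trans ha⟩ - y₀ = -(x a) := by rw [hxa0]; simp [hy]
    rw [h2, m_neg hsmul] at h1
    exact h1
  constructor
  · rintro ⟨hLeb, hLevi⟩ A hAbd hAcl β iβ1 iβ2 iβ3 x hxA hxC
    classical
    haveI : (atTop : Filter β).NeBot := atTop_neBot_iff.mpr ⟨‹_›, ‹_›⟩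
    haveI : Nonempty {v : X // 0 ≤ v} := ⟨⟨0, le_rfl⟩⟩
    haveI : IsDirected {v : X // 0 ≤ v} (· ≤ ·) :=
      ⟨fun i j => ⟨⟨i.1 ⊔ j.1, i.2.trans le_sup_left⟩,
        Subtype.mk_le_mk.mpr le_sup_left, Subtype.mk_le_mk.mpr le_sup_right⟩⟩
    set MA : Λ → ℝ := fun l => (hAbd l).choose with hMAdef
    have hMA : ∀ l, ∀ a ∈ A, m l a ≤ MA l := fun l => (hAbd l).choose_spec
    have zero_of : ∀ w : X, (∀ l, ∀ ε, 0 < ε → m l w < ε) → w = 0 := by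
      intro w hw
      refine hsep _ fun l => le_antisymm ?_ (m_nonneg hadd hsmul l _)
      by_contra hlt
      push_neg at hlt
      exact lt_irrefl _ (hw l _ hlt)
    have le_pair : ∀ (w v1 v2 : X) l, 0 ≤ w → w ≤ |v1| + |v2| → m l w ≤ m l v1 + m l v2 := by
      intro w v1 v2 l hw hle
      calc m l w ≤ m l (|v1| + |v2|) := m_mono' hmono l hw hle
        _ ≤ m l |v1| + m l |v2| := hadd l _ _
        _ = m l v1 + m l v2 := by rw [m_abs hmono, m_abs hmono]
    have le_triple : ∀ (w v1 v2 v3 : X) l, 0 ≤ w → w ≤ |v1| + |v2| + |v3| →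
        m l w ≤ m l v1 + m l v2 + m l v3 := by
      intro w v1 v2 v3 l hw hle
      calc m l w ≤ m l (|v1| + |v2| + |v3|) := m_mono' hmono l hw hle
        _ ≤ m l (|v1| + |v2|) + m l |v3| := hadd l _ _
        _ ≤ m l |v1| + m l |v2| + m l |v3| := by linarith [hadd l (|v1|) (|v2|)]
        _ = m l v1 + m l v2 + m l v3 := by rw [m_abs hmono, m_abs hmono, m_abs hmono]
    have msym : ∀ l (a b : X), m l (a - b) = m l (b - a) := by
      intro l a b
      rw [← m_neg hsmul l, neg_sub]
    have pos_case : ∀ z : β → X, (∀ b, 0 ≤ z b) → (∀ l b, m l (z b) ≤ MA l) →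
        (∀ u : X, 0 ≤ u → ∀ l, ∀ ε > (0:ℝ), ∃ N, ∀ b ≥ N, ∀ c ≥ N,
          m l (|z b - z c| ⊓ u) < ε) →
        ∃ p : X, ∀ u : X, 0 ≤ u → ∀ l,
          Tendsto (fun b => m l (|z b - p| ⊓ u)) atTop (𝓝 0) := by
      intro z hz0 hzbd hzC
      have tLim : ∀ (uu : {v : X // 0 ≤ v}) (n : ℕ), ∃ s : X, ∀ l,
          Tendsto (fun b => m l (z b ⊓ (n • uu.1) - s)) atTop (𝓝 0) := by
        intro uu n
        refine hcomplete β (fun b => z b ⊓ (n • uu.1)) fun l ε hε => ?_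
        obtain ⟨N, hN⟩ := hzC (n • uu.1) (nsmul_nonneg uu.2 n) l ε hε
        refine ⟨N, fun b hb c hc => ?_⟩
        refine lt_of_le_of_lt (hmono l _ _ ?_) (hN b hb c hc)
        exact (aux_trunc_lip (hz0 b) (hz0 c) (nsmul_nonneg uu.2 n)).trans (le_abs_self _)
      choose s hs using tLim
      have s_nonneg : ∀ uu n, 0 ≤ s uu n := by
        intro uu n
        rw [← negPart_eq_zero]
        refine zero_of _ fun l ε hε => ?_
        obtain ⟨N, hN⟩ := aux_forall_of_tendsto (hs uu n l) hε
        refine lt_of_le_of_lt (hmono l _ _ ?_) (hN N le_rfl)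
        rw [abs_of_nonneg (negPart_nonneg _)]
        have h1 : (s uu n)⁻ = |(z N ⊓ (n • uu.1))⁻ - (s uu n)⁻| := by
          rw [negPart_eq_zero.mpr (le_inf (hz0 N) (nsmul_nonneg uu.2 n)), zero_sub, abs_neg,
            abs_of_nonneg (negPart_nonneg _)]
        rw [h1]
        exact aux_negPart_lip _ _
      have s_succ : ∀ uu n, s uu n ≤ s uu (n + 1) := by
        intro uu n
        rw [← sub_nonpos, ← posPart_eq_zero]
        refine zero_of _ fun l ε hε => ?_
        obtain ⟨N1, hN1⟩ := aux_forall_of_tendsto (hs uu n l) (half_pos hε)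
        obtain ⟨N2, hN2⟩ := aux_forall_of_tendsto (hs uu (n + 1) l) (half_pos hε)
        obtain ⟨b, hb1, hb2⟩ := directed_of (· ≤ ·) N1 N2
        have hmid : z b ⊓ (n • uu.1) ≤ z b ⊓ ((n + 1) • uu.1) :=
          inf_le_inf_left _ (nsmul_le_nsmul_left uu.2 (Nat.le_succ n))
        have hle : (s uu n - s uu (n + 1))⁺ ≤
            |s uu n - z b ⊓ (n • uu.1)| + |z b ⊓ ((n + 1) • uu.1) - s uu (n + 1)| := by
          have habs : s uu n - s uu (n + 1) ≤
              |s uu n - z b ⊓ (n • uu.1)| + |z b ⊓ ((n + 1) • uu.1) - s uu (n + 1)| := by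
            calc s uu n - s uu (n + 1)
                = (s uu n - z b ⊓ (n • uu.1)) + (z b ⊓ (n • uu.1) - z b ⊓ ((n + 1) • uu.1))
                  + (z b ⊓ ((n + 1) • uu.1) - s uu (n + 1)) := by abel
              _ ≤ (s uu n - z b ⊓ (n • uu.1)) + 0 + (z b ⊓ ((n + 1) • uu.1) - s uu (n + 1)) :=
                  add_le_add (add_le_add le_rfl (sub_nonpos.mpr hmid)) le_rfl
              _ ≤ |s uu n - z b ⊓ (n • uu.1)| + 0 + |z b ⊓ ((n + 1) • uu.1) - s uu (n + 1)| :=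
                  add_le_add (add_le_add (le_abs_self _) le_rfl) (le_abs_self _)
              _ = _ := by rw [add_zero]
          exact (posPart_mono habs).trans
            (posPart_eq_self.mpr (add_nonneg (abs_nonneg _) (abs_nonneg _))).le
        have h2 := le_pair _ _ _ l (posPart_nonneg _) hle
        have h3 := hN1 b hb1
        have h4 := hN2 b hb2
        rw [msym l (s uu n) (z b ⊓ (n • uu.1))] at h2
        linarith
      have s_mono_n : ∀ uu, Monotone (fun n : ℕ => s uu n) :=
        fun uu => monotone_nat_of_le_succ (s_succ uu)
      have s_mono_u : ∀ (uu vv : {v : X // 0 ≤ v}), uu ≤ vv → ∀ n, s uu n ≤ s vv n := by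
        intro uu vv huv n
        rw [← sub_nonpos, ← posPart_eq_zero]
        refine zero_of _ fun l ε hε => ?_
        obtain ⟨N1, hN1⟩ := aux_forall_of_tendsto (hs uu n l) (half_pos hε)
        obtain ⟨N2, hN2⟩ := aux_forall_of_tendsto (hs vv n l) (half_pos hε)
        obtain ⟨b, hb1, hb2⟩ := directed_of (· ≤ ·) N1 N2
        have hmid : z b ⊓ (n • uu.1) ≤ z b ⊓ (n • vv.1) :=
          inf_le_inf_left _ (nsmul_le_nsmul_right (show uu.1 ≤ vv.1 from huv) n)
        have hle : (s uu n - s vv n)⁺ ≤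
            |s uu n - z b ⊓ (n • uu.1)| + |z b ⊓ (n • vv.1) - s vv n| := by
          have habs : s uu n - s vv n ≤
              |s uu n - z b ⊓ (n • uu.1)| + |z b ⊓ (n • vv.1) - s vv n| := by
            calc s uu n - s vv n
                = (s uu n - z b ⊓ (n • uu.1)) + (z b ⊓ (n • uu.1) - z b ⊓ (n • vv.1))
                  + (z b ⊓ (n • vv.1) - s vv n) := by abel
              _ ≤ (s uu n - z b ⊓ (n • uu.1)) + 0 + (z b ⊓ (n • vv.1) - s vv n) :=
                  add_le_add (add_le_add le_rfl (sub_nonpos.mpr hmid)) le_rfl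
              _ ≤ |s uu n - z b ⊓ (n • uu.1)| + 0 + |z b ⊓ (n • vv.1) - s vv n| :=
                  add_le_add (add_le_add (le_abs_self _) le_rfl) (le_abs_self _)
              _ = _ := by rw [add_zero]
          exact (posPart_mono habs).trans
            (posPart_eq_self.mpr (add_nonneg (abs_nonneg _) (abs_nonneg _))).le
        have h2 := le_pair _ _ _ l (posPart_nonneg _) hle
        have h3 := hN1 b hb1
        have h4 := hN2 b hb2
        rw [msym l (s uu n) (z b ⊓ (n • uu.1))] at h2
        linarith
      have keyineq : ∀ (uu vv : {v : X // 0 ≤ v}) (n mm : ℕ),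
          s vv n ⊓ (s uu mm + uu.1) ≤ s uu (mm + 1) := by
        intro uu vv n mm
        rw [← sub_nonpos, ← posPart_eq_zero]
        refine zero_of _ fun l ε hε => ?_
        have hε3 : (0:ℝ) < ε / 3 := by linarith
        obtain ⟨N1, hN1⟩ := aux_forall_of_tendsto (hs vv n l) hε3
        obtain ⟨N2, hN2⟩ := aux_forall_of_tendsto (hs uu mm l) hε3
        obtain ⟨N3, hN3⟩ := aux_forall_of_tendsto (hs uu (mm + 1) l) hε3
        obtain ⟨b', hb1, hb2⟩ := directed_of (· ≤ ·) N1 N2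
        obtain ⟨b, hb3, hb4⟩ := directed_of (· ≤ ·) b' N3
        have hlat : (z b ⊓ (n • vv.1)) ⊓ ((z b ⊓ (mm • uu.1)) + uu.1) ≤ z b ⊓ ((mm + 1) • uu.1) := by
          refine le_inf (inf_le_left.trans inf_le_left) ?_
          refine inf_le_right.trans ?_
          refine (add_le_add_left inf_le_right uu.1).trans ?_
          rw [← succ_nsmul]
        have hle : (s vv n ⊓ (s uu mm + uu.1) - s uu (mm + 1))⁺ ≤
            |s vv n - z b ⊓ (n • vv.1)| + |s uu mm - z b ⊓ (mm • uu.1)|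
              + |z b ⊓ ((mm + 1) • uu.1) - s uu (mm + 1)| := by
          have hlip : |s vv n ⊓ (s uu mm + uu.1) - (z b ⊓ (n • vv.1)) ⊓ ((z b ⊓ (mm • uu.1)) + uu.1)|
              ≤ |s vv n - z b ⊓ (n • vv.1)| + |s uu mm - z b ⊓ (mm • uu.1)| := by
            refine (aux_inf_lip2 _ _ _ _).trans ?_
            rw [add_sub_add_right_eq_sub]
          have habs : s vv n ⊓ (s uu mm + uu.1) - s uu (mm + 1) ≤
              |s vv n - z b ⊓ (n • vv.1)| + |s uu mm - z b ⊓ (mm • uu.1)|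
                + |z b ⊓ ((mm + 1) • uu.1) - s uu (mm + 1)| := by
            calc s vv n ⊓ (s uu mm + uu.1) - s uu (mm + 1)
                = (s vv n ⊓ (s uu mm + uu.1) - (z b ⊓ (n • vv.1)) ⊓ ((z b ⊓ (mm • uu.1)) + uu.1))
                  + ((z b ⊓ (n • vv.1)) ⊓ ((z b ⊓ (mm • uu.1)) + uu.1) - z b ⊓ ((mm + 1) • uu.1))
                  + (z b ⊓ ((mm + 1) • uu.1) - s uu (mm + 1)) := by abel
              _ ≤ (|s vv n - z b ⊓ (n • vv.1)| + |s uu mm - z b ⊓ (mm • uu.1)|) + 0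
                  + |z b ⊓ ((mm + 1) • uu.1) - s uu (mm + 1)| := by
                  refine add_le_add (add_le_add ((le_abs_self _).trans hlip)
                    (sub_nonpos.mpr hlat)) (le_abs_self _)
              _ = _ := by rw [add_zero]
          exact (posPart_mono habs).trans (posPart_eq_self.mpr
            (add_nonneg (add_nonneg (abs_nonneg _) (abs_nonneg _)) (abs_nonneg _))).le
        have h2 := le_triple _ _ _ _ l (posPart_nonneg _) hle
        have h3 := hN1 b (hb1.trans hb3)
        have h4 := hN2 b (hb2.trans hb3)
        have h5 := hN3 b hb4
        rw [msym l (s vv n) (z b ⊓ (n • vv.1)), msym l (s uu mm) (z b ⊓ (mm • uu.1))] at h2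
        linarith
      have s_bdd : ∀ uu n l, m l (s uu n) ≤ MA l := by
        intro uu n l
        have h1 : ∀ b, m l (s uu n) - MA l ≤ m l (z b ⊓ (n • uu.1) - s uu n) := by
          intro b
          have h2 : m l (s uu n) ≤ m l (s uu n - z b ⊓ (n • uu.1)) + m l (z b ⊓ (n • uu.1)) := by
            have h := hadd l (s uu n - z b ⊓ (n • uu.1)) (z b ⊓ (n • uu.1))
            simpa using h
          have h3 : m l (z b ⊓ (n • uu.1)) ≤ MA l :=
            le_trans (m_mono' hmono l (le_inf (hz0 b) (nsmul_nonneg uu.2 n)) inf_le_left)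
              (hzbd l b)
          rw [msym l (s uu n) (z b ⊓ (n • uu.1))] at h2
          linarith
        have h5 : m l (s uu n) - MA l ≤ 0 :=
          ge_of_tendsto (hs uu n l) (Eventually.of_forall h1)
        linarith
      have hsu0 : ∀ uu : {v : X // 0 ≤ v},
          ∃ w : X, IsLUB (Set.range fun n : ULift.{u} ℕ => s uu n.down) w := by
        intro uu
        refine hLevi (ULift.{u} ℕ) (fun n => s uu n.down)
          (fun a b hab => s_mono_n uu hab) (fun n => s_nonneg uu n.down)
          (fun l => ⟨MA l, fun n => s_bdd uu n.down l⟩)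
      choose su hsu using hsu0
      have hsulim : ∀ (uu : {v : X // 0 ≤ v}) l,
          Tendsto (fun n : ULift.{u} ℕ => m l (su uu - s uu n.down)) atTop (𝓝 0) := by
        intro uu l
        refine hLeb (ULift.{u} ℕ) (fun n => su uu - s uu n.down)
          (fun a b hab => sub_le_sub_left (s_mono_n uu hab) _) ⟨?_, ?_⟩ l
        · rintro _ ⟨n, rfl⟩
          exact sub_nonneg.mpr ((hsu uu).1 (Set.mem_range_self n))
        · intro w hw
          have h1 : ∀ n : ULift.{u} ℕ, s uu n.down ≤ su uu - w := by
            intro n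
            have h2 := hw (Set.mem_range_self n)
            exact le_sub_iff_add_le.mpr (by rw [add_comm]; exact le_sub_iff_add_le.mp h2)
          have h3 : su uu ≤ su uu - w := (hsu uu).2 (by rintro _ ⟨n, rfl⟩; exact h1 n)
          have h4 := sub_nonneg.mpr h3
          rw [sub_sub_cancel_left] at h4
          exact neg_nonneg.mp h4
      have su_bdd : ∀ uu l, m l (su uu) ≤ MA l := by
        intro uu l
        have h1 : ∀ n : ULift.{u} ℕ, m l (su uu) - MA l ≤ m l (su uu - s uu n.down) := by
          intro n
          have h2 : m l (su uu) ≤ m l (su uu - s uu n.down) + m l (s uu n.down) := by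
            have h := hadd l (su uu - s uu n.down) (s uu n.down)
            simpa using h
          linarith [s_bdd uu n.down l]
        have h5 : m l (su uu) - MA l ≤ 0 :=
          ge_of_tendsto (hsulim uu l) (Eventually.of_forall h1)
        linarith
      obtain ⟨p, hp0⟩ := hLevi {v : X // 0 ≤ v} (fun uu => su uu)
        (fun uu vv huv => (hsu uu).2 (by
          rintro _ ⟨n, rfl⟩
          exact (s_mono_u uu vv huv n.down).trans ((hsu vv).1 (Set.mem_range_self n))))
        (fun uu => (s_nonneg uu 0).trans ((hsu uu).1 (Set.mem_range_self (ULift.up 0))))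
        (fun l => ⟨MA l, fun uu => su_bdd uu l⟩)
      have hdisj : ∀ uu : {v : X // 0 ≤ v}, (p - su uu) ⊓ uu.1 = 0 := by
        intro uu
        have hstep1 : ∀ (vv : {v : X // 0 ≤ v}) (n : ℕ), s vv n ⊓ (su uu + uu.1) ≤ su uu := by
          intro vv n
          have h1 := aux_isLUB_add (hsu uu) uu.1
          have h2 := aux_isLUB_inf h1 (s vv n)
          have h3 : (su uu + uu.1) ⊓ s vv n ≤ su uu := by
            refine h2.2 ?_
            rintro _ ⟨mm, rfl⟩
            show (s uu mm.down + uu.1) ⊓ s vv n ≤ su uu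
            rw [inf_comm]
            exact (keyineq uu vv n mm.down).trans
              ((hsu uu).1 (Set.mem_range_self (ULift.up (mm.down + 1))))
          rw [inf_comm]
          exact h3
        have hstep2 : ∀ vv : {v : X // 0 ≤ v}, su vv ⊓ (su uu + uu.1) ≤ su uu := by
          intro vv
          refine (aux_isLUB_inf (hsu vv) (su uu + uu.1)).2 ?_
          rintro _ ⟨n, rfl⟩
          exact hstep1 vv n.down
        have hstep3 : p ⊓ (su uu + uu.1) ≤ su uu := by
          refine (aux_isLUB_inf hp0 (su uu + uu.1)).2 ?_
          rintro _ ⟨vv, rfl⟩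
          exact hstep2 vv
        have heq : p ⊓ (su uu + uu.1) = su uu :=
          le_antisymm hstep3 (le_inf (hp0.1 (Set.mem_range_self uu))
            (le_add_of_nonneg_right uu.2))
        have hid : p ⊓ (su uu + uu.1) - su uu = (p - su uu) ⊓ uu.1 := by
          rw [aux_inf_sub p (su uu + uu.1) (su uu), add_sub_cancel_left]
        rw [← hid, heq, sub_self]
      refine ⟨p, fun u0 hu0 l => ?_⟩
      refine aux_tendsto_of_forall (fun b => m_nonneg hadd hsmul l _) fun ε hε => ?_
      set uu : {v : X // 0 ≤ v} := ⟨u0, hu0⟩ with huu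
      have hMA0 : 0 ≤ MA l :=
        le_trans (m_nonneg hadd hsmul l (z (Classical.arbitrary β))) (hzbd l _)
      obtain ⟨n1, hn1⟩ := exists_nat_gt (3 * MA l / ε)
      obtain ⟨N2u, hN2u⟩ := aux_forall_of_tendsto (hsulim uu l)
        (show (0:ℝ) < ε / 3 by linarith)
      set n0 : ℕ := max n1 N2u.down with hn0def
      have hterm3a : m l (su uu - s uu n0) < ε / 3 :=
        hN2u (ULift.up n0) (le_max_right _ _)
      have hn0 : 3 * MA l < ε * (n0 + 1) := by
        have hcast : (n1:ℝ) ≤ (n0:ℝ) := Nat.cast_le.mpr (le_max_left _ _)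
        rw [div_lt_iff₀ hε] at hn1
        nlinarith
      obtain ⟨N3, hN3⟩ := aux_forall_of_tendsto (hs uu n0 l)
        (show (0:ℝ) < ε / 3 by linarith)
      refine ⟨N3, fun b hb => ?_⟩
      have h1nn : 0 ≤ z b - z b ⊓ (n0 • u0) := sub_nonneg.mpr inf_le_left
      have habsnn : (0:X) ≤ |z b ⊓ (n0 • u0) - s uu n0| := abs_nonneg _
      have hsnle : s uu n0 ≤ su uu := (hsu uu).1 (Set.mem_range_self (ULift.up n0))
      have hsuple : su uu ≤ p := hp0.1 (Set.mem_range_self uu)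
      have hp3nn : 0 ≤ p - s uu n0 := sub_nonneg.mpr (hsnle.trans hsuple)
      have habs : |z b - p| ≤ (z b - z b ⊓ (n0 • u0)) + |z b ⊓ (n0 • u0) - s uu n0|
          + (p - s uu n0) := by
        have hdec : z b - p = (z b - z b ⊓ (n0 • u0)) + (z b ⊓ (n0 • u0) - s uu n0)
            + (s uu n0 - p) := by abel
        calc |z b - p| ≤ |(z b - z b ⊓ (n0 • u0)) + (z b ⊓ (n0 • u0) - s uu n0)|
            + |s uu n0 - p| := by rw [hdec]; exact abs_add_le _ _
          _ ≤ (|z b - z b ⊓ (n0 • u0)| + |z b ⊓ (n0 • u0) - s uu n0|) + |s uu n0 - p| :=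
              add_le_add_left (abs_add_le _ _) _
          _ = (z b - z b ⊓ (n0 • u0)) + |z b ⊓ (n0 • u0) - s uu n0| + (p - s uu n0) := by
              rw [abs_of_nonneg h1nn, abs_sub_comm (s uu n0) p, abs_of_nonneg hp3nn]
      have hsplit : |z b - p| ⊓ u0 ≤ (z b - z b ⊓ (n0 • u0)) ⊓ u0
          + |z b ⊓ (n0 • u0) - s uu n0| ⊓ u0 + (p - s uu n0) ⊓ u0 := by
        refine le_trans (inf_le_inf_right u0 habs) ?_
        refine le_trans (aux_inf_add_inf_le (add_nonneg h1nn habsnn) hp3nn hu0) ?_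
        exact add_le_add_left (aux_inf_add_inf_le h1nn habsnn hu0) _
      have hterm1 : m l ((z b - z b ⊓ (n0 • u0)) ⊓ u0) < ε / 3 := by
        have hlayer : (n0 + 1) • ((z b - z b ⊓ (n0 • u0)) ⊓ u0) ≤ z b := by
          rw [aux_sub_inf_pos]
          exact aux_layer (hz0 b) hu0 n0
        have hb1 : m l ((n0 + 1) • ((z b - z b ⊓ (n0 • u0)) ⊓ u0)) ≤ m l (z b) :=
          m_mono' hmono l (nsmul_nonneg (le_inf h1nn hu0) (n0 + 1)) hlayer
        rw [m_nsmul hsmul] at hb1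
        push_cast at hb1
        have hnpos : (0:ℝ) < (n0:ℝ) + 1 := by positivity
        have hv : m l ((z b - z b ⊓ (n0 • u0)) ⊓ u0) * ((n0:ℝ) + 1) < ε / 3 * ((n0:ℝ) + 1) := by
          nlinarith [hzbd l b]
        exact lt_of_mul_lt_mul_right hv hnpos.le
      have hterm2 : m l (|z b ⊓ (n0 • u0) - s uu n0| ⊓ u0) < ε / 3 := by
        refine lt_of_le_of_lt ?_ (hN3 b hb)
        refine le_trans (m_mono' hmono l (le_inf habsnn hu0) inf_le_left) ?_
        rw [m_abs hmono]
      have hterm3 : m l ((p - s uu n0) ⊓ u0) < ε / 3 := by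
        have hdec2 : p - s uu n0 = (p - su uu) + (su uu - s uu n0) := by abel
        have h1 : (p - s uu n0) ⊓ u0 ≤ (p - su uu) ⊓ u0 + (su uu - s uu n0) ⊓ u0 := by
          rw [hdec2]
          exact aux_inf_add_inf_le (sub_nonneg.mpr hsuple) (sub_nonneg.mpr hsnle) hu0
        have h2 : (p - su uu) ⊓ u0 = 0 := hdisj uu
        rw [h2, zero_add] at h1
        refine lt_of_le_of_lt ?_ hterm3a
        exact m_mono' hmono l (le_inf hp3nn hu0) (h1.trans inf_le_left)
      calc m l (|z b - p| ⊓ u0)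
          ≤ m l ((z b - z b ⊓ (n0 • u0)) ⊓ u0 + |z b ⊓ (n0 • u0) - s uu n0| ⊓ u0
            + (p - s uu n0) ⊓ u0) := m_mono' hmono l (le_inf (abs_nonneg _) hu0) hsplit
        _ ≤ m l ((z b - z b ⊓ (n0 • u0)) ⊓ u0 + |z b ⊓ (n0 • u0) - s uu n0| ⊓ u0)
            + m l ((p - s uu n0) ⊓ u0) := hadd l _ _
        _ ≤ m l ((z b - z b ⊓ (n0 • u0)) ⊓ u0) + m l (|z b ⊓ (n0 • u0) - s uu n0| ⊓ u0)
            + m l ((p - s uu n0) ⊓ u0) := by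
            linarith [hadd l ((z b - z b ⊓ (n0 • u0)) ⊓ u0) (|z b ⊓ (n0 • u0) - s uu n0| ⊓ u0)]
        _ < ε / 3 + ε / 3 + ε / 3 := by linarith
        _ = ε := by ring
    -- apply positive case to x⁺ and x⁻
    have hposC : ∀ u : X, 0 ≤ u → ∀ l, ∀ ε > (0:ℝ), ∃ N, ∀ b ≥ N, ∀ c ≥ N,
        m l (|(x b)⁺ - (x c)⁺| ⊓ u) < ε := by
      intro u hu l ε hε
      obtain ⟨N, hN⟩ := hxC u hu l ε hε
      refine ⟨N, fun b hb c hc => ?_⟩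
      refine lt_of_le_of_lt (m_mono' hmono l (le_inf (abs_nonneg _) hu)
        (inf_le_inf_right u (aux_posPart_lip (x b) (x c)))) (hN b hb c hc)
    have hnegC : ∀ u : X, 0 ≤ u → ∀ l, ∀ ε > (0:ℝ), ∃ N, ∀ b ≥ N, ∀ c ≥ N,
        m l (|(x b)⁻ - (x c)⁻| ⊓ u) < ε := by
      intro u hu l ε hε
      obtain ⟨N, hN⟩ := hxC u hu l ε hε
      refine ⟨N, fun b hb c hc => ?_⟩
      refine lt_of_le_of_lt (m_mono' hmono l (le_inf (abs_nonneg _) hu)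
        (inf_le_inf_right u (aux_negPart_lip (x b) (x c)))) (hN b hb c hc)
    have hxbdp : ∀ l b, m l ((x b)⁺) ≤ MA l := by
      intro l b
      refine le_trans (hmono l _ _ ?_) (hMA l (x b) (hxA b))
      rw [abs_of_nonneg (posPart_nonneg _)]
      exact aux_posPart_le_abs _
    have hxbdn : ∀ l b, m l ((x b)⁻) ≤ MA l := by
      intro l b
      refine le_trans (hmono l _ _ ?_) (hMA l (x b) (hxA b))
      rw [abs_of_nonneg (negPart_nonneg _)]
      exact aux_negPart_le_abs _
    obtain ⟨p, hp⟩ := pos_case (fun b => (x b)⁺) (fun b => posPart_nonneg _)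
      (fun l b => hxbdp l b) hposC
    obtain ⟨q, hq⟩ := pos_case (fun b => (x b)⁻) (fun b => negPart_nonneg _)
      (fun l b => hxbdn l b) hnegC
    have hconv : ∀ u : X, 0 ≤ u → ∀ l,
        Tendsto (fun b => m l (|x b - (p - q)| ⊓ u)) atTop (𝓝 0) := by
      intro u hu l
      refine squeeze_zero (fun b => m_nonneg hadd hsmul l _)
        (g := fun b => m l (|(x b)⁺ - p| ⊓ u) + m l (|(x b)⁻ - q| ⊓ u)) (fun b => ?_) ?_
      · have habs : |x b - (p - q)| ≤ |(x b)⁺ - p| + |(x b)⁻ - q| := by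
          have hdec : x b - (p - q) = ((x b)⁺ - p) - ((x b)⁻ - q) := by
            calc x b - (p - q) = ((x b)⁺ - (x b)⁻) - (p - q) := by
                  rw [posPart_sub_negPart]
              _ = ((x b)⁺ - p) - ((x b)⁻ - q) := by abel
          rw [hdec, sub_eq_add_neg]
          exact (abs_add_le _ _).trans (by rw [abs_neg])
        have h1 : |x b - (p - q)| ⊓ u ≤ |(x b)⁺ - p| ⊓ u + |(x b)⁻ - q| ⊓ u :=
          le_trans (inf_le_inf_right u habs)
            (aux_inf_add_inf_le (abs_nonneg _) (abs_nonneg _) hu)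
        refine le_trans (m_mono' hmono l (le_inf (abs_nonneg _) hu) h1) (hadd l _ _)
      · simpa using (hp u hu l).add (hq u hu l)
    exact ⟨p - q, aux_mem_of_umclosed hadd hsmul hmono hAcl x hxA (p - q) hconv, hconv⟩
  · intro hRHS
    refine ⟨lebesgue, ?_⟩
    intro α _ _ _ x hx hx0 hbd
    classical
    set M : Λ → ℝ := fun l => (hbd l).choose with hM
    have hMspec : ∀ l a, m l (x a) ≤ M l := fun l => (hbd l).choose_spec
    set A : Set X := {y : X | 0 ≤ y ∧ ∀ l, m l y ≤ M l} with hA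
    obtain ⟨x₀, hx₀A, hx₀conv⟩ := hRHS A (fun l => ⟨M l, fun a ha => ha.2 l⟩)
      (aux_closed_ball hadd hsmul hmono hsep M) α x
      (fun a => ⟨hx0 a, fun l => hMspec l a⟩)
      (fun u hu l ε hε => auxB hadd hsmul hmono hpreLeb x hx l (M l) (hMspec l) hu hε)
    exact ⟨x₀, auxLUBum hadd hsmul hmono hsep x hx x₀ hx₀conv⟩
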